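/- Let E be a complete real inner product space, N ≥ 1, and for j = 1,…,N let f_j : E → ℝ be differentiable and L-smooth, and let w_j > 0, S_j > 0 be real constants. Define g : E → ℝ by g(θ) = (1/N)·Σ_{j=1}^N ln(w_j·exp(−f_j(θ)) + S_j). Then for all θ_1, θ_2 ∈ E, ‖∇g(θ_1) − ∇g(θ_2)‖ ≤ L·‖θ_1 − θ_2‖ + (1/N)·Σ_{j=1}^N [ (L/8)·‖θ_1 − θ_2‖²·‖∇f_j(θ_2)‖ + (3/8)·‖θ_1 − θ_2‖·‖∇f_j(θ_2)‖² ]. -/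

import Mathlib

open Finset

open scoped RealInnerProductSpace
open InnerProductSpace

private lemma sig_hasDerivAt' {w S : ℝ} (hw : 0 < w) (hS : 0 < S) (t : ℝ) :
    HasDerivAt (fun t => w * Real.exp (-t) / (w * Real.exp (-t) + S))
      (-(w * Real.exp (-t)) * S / (w * Real.exp (-t) + S) ^ 2) t := by
  have hu : HasDerivAt (fun t : ℝ => w * Real.exp (-t)) (-(w * Real.exp (-t))) t := by
    simpa [mul_comm] using ((Real.hasDerivAt_exp (-t)).comp t (hasDerivAt_neg t)).const_mul w
  have hv : HasDerivAt (fun t : ℝ => w * Real.exp (-t) + S) (-(w * Real.exp (-t))) t :=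
    hu.add_const S
  have hvne : w * Real.exp (-t) + S ≠ 0 := by positivity
  have := hu.fun_div hv hvne
  refine this.congr_deriv ?_
  have h1 : (0:ℝ) < Real.exp (-t) := Real.exp_pos _
  ring

private lemma sig_lip' {w S : ℝ} (hw : 0 < w) (hS : 0 < S) (a b : ℝ) :
    |w * Real.exp (-a) / (w * Real.exp (-a) + S) -
      w * Real.exp (-b) / (w * Real.exp (-b) + S)| ≤ |a - b| / 4 := by
  have := (convex_univ (𝕜 := ℝ) (E := ℝ)).norm_image_sub_le_of_norm_hasDerivWithin_le
    (f := fun t => w * Real.exp (-t) / (w * Real.exp (-t) + S))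
    (f' := fun t => -(w * Real.exp (-t)) * S / (w * Real.exp (-t) + S) ^ 2)
    (C := 1/4)
    (fun x _ => (sig_hasDerivAt' hw hS x).hasDerivWithinAt)
    (fun t _ => by
      have hu : (0:ℝ) < w * Real.exp (-t) := by positivity
      rw [Real.norm_eq_abs, abs_div,
        abs_of_nonneg (by positivity : (0:ℝ) ≤ (w * Real.exp (-t) + S)^2)]
      rw [div_le_iff₀ (by positivity)]
      have : |(-(w * Real.exp (-t)) * S)| = w * Real.exp (-t) * S := by
        rw [abs_of_nonpos (by nlinarith)]; ring
      rw [this]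
      nlinarith [sq_nonneg (w * Real.exp (-t) - S)])
    (Set.mem_univ b) (Set.mem_univ a)
  simpa [Real.norm_eq_abs, div_eq_mul_inv, mul_comm] using this

private lemma descent' {E : Type*} [NormedAddCommGroup E] [InnerProductSpace ℝ E]
    [CompleteSpace E]
    (f : E → ℝ) (hf : Differentiable ℝ f) {L : ℝ}
    (hs : ∀ a b : E, ‖gradient f a - gradient f b‖ ≤ L * ‖a - b‖) (x y : E) :
    |f y - f x - ⟪gradient f x, y - x⟫| ≤ L / 2 * ‖y - x‖ ^ 2 := by
  rcases eq_or_ne y x with rfl | hne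
  · simp
  have hΔpos : (0:ℝ) < ‖y - x‖ := by
    rw [norm_pos_iff]; exact sub_ne_zero.mpr hne
  have hL : 0 ≤ L := by
    have := hs y x
    nlinarith [norm_nonneg (gradient f y - gradient f x)]
  set Δ := y - x with hΔ
  set ψ : ℝ → ℝ := fun t => ⟪gradient f (x + t • Δ), Δ⟫ with hψ
  have hφ' : ∀ t : ℝ, HasDerivAt (fun s : ℝ => f (x + s • Δ)) (ψ t) t := by
    intro t
    have hline : HasDerivAt (fun s : ℝ => x + s • Δ) Δ t := by
      simpa using ((hasDerivAt_id t).smul_const Δ).const_add x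
    have := ((hf (x + t • Δ)).hasGradientAt.hasFDerivAt).comp_hasDerivAt t hline
    exact this
  have lipgrad : LipschitzWith (Real.toNNReal L) (gradient f) := by
    apply LipschitzWith.of_dist_le_mul
    intro a b
    rw [dist_eq_norm, dist_eq_norm, Real.coe_toNNReal L hL]
    exact hs a b
  have contψ : Continuous ψ := by
    apply Continuous.inner
    · exact lipgrad.continuous.comp (by continuity)
    · exact continuous_const
  have hFTC : ∫ t in (0:ℝ)..1, ψ t = f (x + (1:ℝ) • Δ) - f (x + (0:ℝ) • Δ) :=
    intervalIntegral.integral_eq_sub_of_hasDerivAt (fun t _ => hφ' t)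
      (contψ.intervalIntegrable 0 1)
  have hxy : x + (1:ℝ) • Δ = y := by rw [one_smul, hΔ]; abel
  have h10 : f (x + (1:ℝ) • Δ) = f y := by rw [hxy]
  have h00 : f (x + (0:ℝ) • Δ) = f x := by rw [zero_smul, add_zero]
  have key : f y - f x - ⟪gradient f x, Δ⟫ = ∫ t in (0:ℝ)..1, (ψ t - ψ 0) := by
    rw [intervalIntegral.integral_sub (contψ.intervalIntegrable 0 1)
      (intervalIntegrable_const), hFTC, h10, h00]
    simp [hψ]
  have hbd : ∀ t ∈ Set.uIoc (0:ℝ) 1, ‖ψ t - ψ 0‖ ≤ L * ‖Δ‖ ^ 2 * t := by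
    intro t ht
    rw [Set.mem_uIoc] at ht
    have ht' : 0 < t ∧ t ≤ 1 := by
      constructor <;> rcases ht with h | h <;> linarith [h.1, h.2]
    have : ψ t - ψ 0 = ⟪gradient f (x + t • Δ) - gradient f (x + (0:ℝ) • Δ), Δ⟫ := by
      rw [inner_sub_left]
    rw [Real.norm_eq_abs, this]
    calc |⟪gradient f (x + t • Δ) - gradient f (x + (0:ℝ) • Δ), Δ⟫|
        ≤ ‖gradient f (x + t • Δ) - gradient f (x + (0:ℝ) • Δ)‖ * ‖Δ‖ :=
          abs_real_inner_le_norm _ _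
      _ ≤ (L * ‖(x + t • Δ) - (x + (0:ℝ) • Δ)‖) * ‖Δ‖ := by
          apply mul_le_mul_of_nonneg_right (hs _ _) (norm_nonneg _)
      _ = L * ‖Δ‖ ^ 2 * t := by
          have : (x + t • Δ) - (x + (0:ℝ) • Δ) = t • Δ := by module
          rw [this, norm_smul, Real.norm_eq_abs, abs_of_pos ht'.1]; ring
  have hint : |∫ t in (0:ℝ)..1, (ψ t - ψ 0)| ≤ |∫ t in (0:ℝ)..1, L * ‖Δ‖ ^ 2 * t| := by
    have := intervalIntegral.norm_integral_le_abs_of_norm_le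
      (f := fun t => ψ t - ψ 0) (g := fun t => L * ‖Δ‖ ^ 2 * t)
      (μ := MeasureTheory.volume) (a := (0:ℝ)) (b := 1)
      (MeasureTheory.ae_restrict_of_forall_mem measurableSet_uIoc hbd)
      (by apply Continuous.intervalIntegrable; continuity)
    simpa [Real.norm_eq_abs] using this
  have hval : ∫ t in (0:ℝ)..1, L * ‖Δ‖ ^ 2 * t = L * ‖Δ‖ ^ 2 / 2 := by
    rw [intervalIntegral.integral_const_mul, integral_id]
    ring
  rw [key]
  calc |∫ t in (0:ℝ)..1, (ψ t - ψ 0)| ≤ |∫ t in (0:ℝ)..1, L * ‖Δ‖ ^ 2 * t| := hint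
    _ = L / 2 * ‖Δ‖ ^ 2 := by rw [hval, abs_of_nonneg (by positivity)]; ring

private lemma term_bound' {E : Type*} [NormedAddCommGroup E] [InnerProductSpace ℝ E]
    [CompleteSpace E]
    (fj : E → ℝ) {L w S : ℝ}
    (hs : ∀ a b : E, ‖gradient fj a - gradient fj b‖ ≤ L * ‖a - b‖)
    (hw : 0 < w) (hS : 0 < S) (θ1 θ2 : E)
    (descent : |fj θ1 - fj θ2 - ⟪gradient fj θ2, θ1 - θ2⟫| ≤ L / 2 * ‖θ1 - θ2‖ ^ 2)
    (siglip : |w * Real.exp (-(fj θ1)) / (w * Real.exp (-(fj θ1)) + S) -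
      w * Real.exp (-(fj θ2)) / (w * Real.exp (-(fj θ2)) + S)| ≤ |fj θ1 - fj θ2| / 4) :
    ‖(-(w * Real.exp (-(fj θ1)) / (w * Real.exp (-(fj θ1)) + S))) • gradient fj θ1 -
      (-(w * Real.exp (-(fj θ2)) / (w * Real.exp (-(fj θ2)) + S))) • gradient fj θ2‖ ≤
    L * ‖θ1 - θ2‖ + ((L / 8) * ‖θ1 - θ2‖ ^ 2 * ‖gradient fj θ2‖ +
      (3 / 8) * ‖θ1 - θ2‖ * ‖gradient fj θ2‖ ^ 2) := by
  set a1 := w * Real.exp (-(fj θ1)) / (w * Real.exp (-(fj θ1)) + S) with ha1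
  set a2 := w * Real.exp (-(fj θ2)) / (w * Real.exp (-(fj θ2)) + S) with ha2
  set G1 := gradient fj θ1
  set G2 := gradient fj θ2
  have ha1pos : 0 < a1 := by rw [ha1]; positivity
  have ha1le : a1 ≤ 1 := by
    rw [ha1, div_le_one (by positivity)]; linarith
  have hsplit : (-a1) • G1 - (-a2) • G2 = a1 • (G2 - G1) + (a2 - a1) • G2 := by module
  rw [hsplit]
  have hG : ‖G2 - G1‖ ≤ L * ‖θ1 - θ2‖ := by
    rw [norm_sub_rev]; exact hs θ1 θ2
  have hfd : |fj θ1 - fj θ2| ≤ ‖G2‖ * ‖θ1 - θ2‖ + L / 2 * ‖θ1 - θ2‖ ^ 2 := by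
    have h1 : |⟪G2, θ1 - θ2⟫| ≤ ‖G2‖ * ‖θ1 - θ2‖ := abs_real_inner_le_norm _ _
    calc |fj θ1 - fj θ2| ≤ |fj θ1 - fj θ2 - ⟪G2, θ1 - θ2⟫| + |⟪G2, θ1 - θ2⟫| := by
          have := abs_add_le (fj θ1 - fj θ2 - ⟪G2, θ1 - θ2⟫) (⟪G2, θ1 - θ2⟫)
          simpa using this
      _ ≤ ‖G2‖ * ‖θ1 - θ2‖ + L / 2 * ‖θ1 - θ2‖ ^ 2 := by linarith
  calc ‖a1 • (G2 - G1) + (a2 - a1) • G2‖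
      ≤ ‖a1 • (G2 - G1)‖ + ‖(a2 - a1) • G2‖ := norm_add_le _ _
    _ = |a1| * ‖G2 - G1‖ + |a2 - a1| * ‖G2‖ := by rw [norm_smul, norm_smul]; rfl
    _ ≤ 1 * (L * ‖θ1 - θ2‖) + (|fj θ1 - fj θ2| / 4) * ‖G2‖ := by
        have h1 : |a1| = a1 := abs_of_pos ha1pos
        have h2 : |a2 - a1| ≤ |fj θ1 - fj θ2| / 4 := by
          rw [abs_sub_comm]; exact siglip
        have h3 : |a1| * ‖G2 - G1‖ ≤ 1 * (L * ‖θ1 - θ2‖) := by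
          rw [h1, one_mul]
          calc a1 * ‖G2 - G1‖ ≤ 1 * ‖G2 - G1‖ :=
                mul_le_mul_of_nonneg_right ha1le (norm_nonneg _)
            _ = ‖G2 - G1‖ := one_mul _
            _ ≤ L * ‖θ1 - θ2‖ := hG
        have h4 : |a2 - a1| * ‖G2‖ ≤ (|fj θ1 - fj θ2| / 4) * ‖G2‖ :=
          mul_le_mul_of_nonneg_right h2 (norm_nonneg _)
        linarith
    _ ≤ L * ‖θ1 - θ2‖ + ((L / 8) * ‖θ1 - θ2‖ ^ 2 * ‖G2‖ +
        (3 / 8) * ‖θ1 - θ2‖ * ‖G2‖ ^ 2) := by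
        have h5 : (|fj θ1 - fj θ2| / 4) * ‖G2‖ ≤
            ((‖G2‖ * ‖θ1 - θ2‖ + L / 2 * ‖θ1 - θ2‖ ^ 2) / 4) * ‖G2‖ :=
          mul_le_mul_of_nonneg_right (by linarith) (norm_nonneg _)
        nlinarith [norm_nonneg G2, norm_nonneg (θ1 - θ2)]

private lemma grad_g' {E : Type*} [NormedAddCommGroup E] [InnerProductSpace ℝ E]
    [CompleteSpace E]
    (N : ℕ) (f : Fin N → E → ℝ) (hf : ∀ j, Differentiable ℝ (f j))
    (w S : Fin N → ℝ) (hw : ∀ j, 0 < w j) (hS : ∀ j, 0 < S j)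
    (g : E → ℝ)
    (hg : ∀ θ, g θ = (1 / (N : ℝ)) * ∑ j, Real.log (w j * Real.exp (-(f j θ)) + S j))
    (θ : E) :
    gradient g θ = (N : ℝ)⁻¹ • ∑ j,
      (-(w j * Real.exp (-(f j θ)) / (w j * Real.exp (-(f j θ)) + S j))) • gradient (f j) θ := by
  have hterm : ∀ j : Fin N, HasFDerivAt (fun θ => Real.log (w j * Real.exp (-(f j θ)) + S j))
      (toDual ℝ E ((-(w j * Real.exp (-(f j θ)) / (w j * Real.exp (-(f j θ)) + S j))) •
        gradient (f j) θ)) θ := by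
    intro j
    have hu : HasDerivAt (fun t : ℝ => w j * Real.exp (-t))
        (-(w j * Real.exp (-(f j θ)))) (f j θ) := by
      simpa [mul_comm] using
        ((Real.hasDerivAt_exp (-(f j θ))).comp (f j θ) (hasDerivAt_neg (f j θ))).const_mul (w j)
    have hlog : HasDerivAt (fun t : ℝ => Real.log (w j * Real.exp (-t) + S j))
        (-(w j * Real.exp (-(f j θ))) / (w j * Real.exp (-(f j θ)) + S j)) (f j θ) := by
      have hpos : (0:ℝ) < w j * Real.exp (-(f j θ)) + S j := by
        have := (hw j); have := (hS j); positivity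
      exact (hu.add_const (S j)).log (ne_of_gt hpos)
    have hF := ((hf j) θ).hasGradientAt.hasFDerivAt
    have hc := hlog.comp_hasFDerivAt θ hF
    have heq : ((-(w j * Real.exp (-(f j θ)))) / (w j * Real.exp (-(f j θ)) + S j)) •
        (toDual ℝ E (gradient (f j) θ)) =
        toDual ℝ E ((-(w j * Real.exp (-(f j θ)) / (w j * Real.exp (-(f j θ)) + S j))) •
          gradient (f j) θ) := by
      rw [map_smul, neg_div]
    rw [heq] at hc
    exact hc
  have hsum : HasFDerivAt (fun θ => ∑ j, Real.log (w j * Real.exp (-(f j θ)) + S j))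
      (∑ j, toDual ℝ E ((-(w j * Real.exp (-(f j θ)) / (w j * Real.exp (-(f j θ)) + S j))) •
        gradient (f j) θ)) θ := HasFDerivAt.fun_sum (fun j _ => hterm j)
  have hmul := hsum.const_mul ((N : ℝ)⁻¹)
  have hgeq : g = fun θ => (N : ℝ)⁻¹ * ∑ j, Real.log (w j * Real.exp (-(f j θ)) + S j) := by
    funext θ'; rw [hg θ', one_div]
  have hGrad : HasGradientAt g ((N : ℝ)⁻¹ • ∑ j,
      (-(w j * Real.exp (-(f j θ)) / (w j * Real.exp (-(f j θ)) + S j))) •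
        gradient (f j) θ) θ := by
    rw [hgeq, hasGradientAt_iff_hasFDerivAt, map_smul, map_sum]
    exact hmul
  exact hGrad.gradient

theorem stmt_6 {E : Type*} [NormedAddCommGroup E] [InnerProductSpace ℝ E] [CompleteSpace E]
    (N : ℕ) (hN : 1 ≤ N)
    (f : Fin N → E → ℝ) (hf : ∀ j, Differentiable ℝ (f j)) (L : ℝ)
    (hsmooth : ∀ (j : Fin N) (a b : E),
      ‖gradient (f j) a - gradient (f j) b‖ ≤ L * ‖a - b‖)
    (w S : Fin N → ℝ) (hw : ∀ j, 0 < w j) (hS : ∀ j, 0 < S j)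
    (g : E → ℝ)
    (hg : ∀ θ, g θ = (1 / (N : ℝ)) * ∑ j, Real.log (w j * Real.exp (-(f j θ)) + S j)) :
    ∀ θ1 θ2 : E,
      ‖gradient g θ1 - gradient g θ2‖ ≤
        L * ‖θ1 - θ2‖ +
          (1 / (N : ℝ)) * ∑ j,
            ((L / 8) * ‖θ1 - θ2‖ ^ 2 * ‖gradient (f j) θ2‖ +
              (3 / 8) * ‖θ1 - θ2‖ * ‖gradient (f j) θ2‖ ^ 2) := by
  intro θ1 θ2
  have hNpos : (0:ℝ) < (N : ℝ) := by exact_mod_cast hN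
  rw [grad_g' N f hf w S hw hS g hg θ1, grad_g' N f hf w S hw hS g hg θ2,
    ← smul_sub, ← Finset.sum_sub_distrib]
  have hterm : ∀ j : Fin N,
      ‖(-(w j * Real.exp (-(f j θ1)) / (w j * Real.exp (-(f j θ1)) + S j))) • gradient (f j) θ1 -
        (-(w j * Real.exp (-(f j θ2)) / (w j * Real.exp (-(f j θ2)) + S j))) •
          gradient (f j) θ2‖ ≤
      L * ‖θ1 - θ2‖ + ((L / 8) * ‖θ1 - θ2‖ ^ 2 * ‖gradient (f j) θ2‖ +
        (3 / 8) * ‖θ1 - θ2‖ * ‖gradient (f j) θ2‖ ^ 2) := fun j =>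
    term_bound' (f j) (hsmooth j) (hw j) (hS j) θ1 θ2
      (descent' (f j) (hf j) (hsmooth j) θ2 θ1)
      (sig_lip' (hw j) (hS j) (f j θ1) (f j θ2))
  calc ‖(N : ℝ)⁻¹ • ∑ j,
        ((-(w j * Real.exp (-(f j θ1)) / (w j * Real.exp (-(f j θ1)) + S j))) • gradient (f j) θ1 -
          (-(w j * Real.exp (-(f j θ2)) / (w j * Real.exp (-(f j θ2)) + S j))) •
            gradient (f j) θ2)‖
      = (N : ℝ)⁻¹ * ‖∑ j,
        ((-(w j * Real.exp (-(f j θ1)) / (w j * Real.exp (-(f j θ1)) + S j))) • gradient (f j) θ1 -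
          (-(w j * Real.exp (-(f j θ2)) / (w j * Real.exp (-(f j θ2)) + S j))) •
            gradient (f j) θ2)‖ := by
        rw [norm_smul, Real.norm_eq_abs, abs_of_pos (by positivity)]
    _ ≤ (N : ℝ)⁻¹ * ∑ j,
        ‖(-(w j * Real.exp (-(f j θ1)) / (w j * Real.exp (-(f j θ1)) + S j))) • gradient (f j) θ1 -
          (-(w j * Real.exp (-(f j θ2)) / (w j * Real.exp (-(f j θ2)) + S j))) •
            gradient (f j) θ2‖ := by
        apply mul_le_mul_of_nonneg_left (norm_sum_le _ _) (by positivity)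
    _ ≤ (N : ℝ)⁻¹ * ∑ j, (L * ‖θ1 - θ2‖ + ((L / 8) * ‖θ1 - θ2‖ ^ 2 * ‖gradient (f j) θ2‖ +
        (3 / 8) * ‖θ1 - θ2‖ * ‖gradient (f j) θ2‖ ^ 2)) := by
        apply mul_le_mul_of_nonneg_left (Finset.sum_le_sum fun j _ => hterm j) (by positivity)
    _ = L * ‖θ1 - θ2‖ + (1 / (N : ℝ)) * ∑ j,
        ((L / 8) * ‖θ1 - θ2‖ ^ 2 * ‖gradient (f j) θ2‖ +
          (3 / 8) * ‖θ1 - θ2‖ * ‖gradient (f j) θ2‖ ^ 2) := by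
        rw [Finset.sum_add_distrib, Finset.sum_const, card_univ, Fintype.card_fin,
          nsmul_eq_mul]
        field_simp
        ring
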